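/- arXiv:0803.2484 — 3 statements merged into one kernel-verified Lean document; each statement's English description precedes it below -/
import Mathlib

section
/- The group with presentation ⟨a, b, c | aba⁻¹ = b², bcb⁻¹ = c², cac⁻¹ = a²⟩ is the trivial group. -/
private lemma push_pow {G : Type*} [Group G] (x y : G) (h : y * x = x * y ^ 2) :
    ∀ n : ℕ, y ^ n * x = x * y ^ (2 * n) := by
  intro n
  induction n with
  | zero => simp
  | succ n ih =>
    calc y ^ (n + 1) * x = y ^ n * (y * x) := by rw [pow_succ, mul_assoc]
      _ = y ^ n * (x * y ^ 2) := by rw [h]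
      _ = (y ^ n * x) * y ^ 2 := by rw [mul_assoc]
      _ = (x * y ^ (2 * n)) * y ^ 2 := by rw [ih]
      _ = x * y ^ (2 * (n + 1)) := by rw [mul_assoc, ← pow_add, Nat.mul_succ]

private lemma collapse {G : Type*} [Group G] {a b c : G}
    (h1 : a * b * a⁻¹ = b ^ 2) (h2 : b * c * b⁻¹ = c ^ 2) (h3 : c * a * c⁻¹ = a ^ 2) :
    a = 1 ∧ b = 1 ∧ c = 1 := by
  -- basic consequences
  have hab : a * b = b ^ 2 * a := by
    calc a * b = (a * b * a⁻¹) * a := by group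
      _ = b ^ 2 * a := by rw [h1]
  have hba : b⁻¹ * a * b = b * a := by
    calc b⁻¹ * a * b = b⁻¹ * (a * b) := by group
      _ = b⁻¹ * (b ^ 2 * a) := by rw [hab]
      _ = b * a := by group
  have hbab : b * a * b⁻¹ = b⁻¹ * a := by
    calc b * a * b⁻¹ = b⁻¹ * (b ^ 2 * a) * b⁻¹ := by group
      _ = b⁻¹ * ((a * b * a⁻¹) * a) * b⁻¹ := by rw [← h1]
      _ = b⁻¹ * a := by group
  have hcbc : c * b * c⁻¹ = c⁻¹ * b := by
    calc c * b * c⁻¹ = c⁻¹ * (c ^ 2 * b) * c⁻¹ := by group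
      _ = c⁻¹ * ((b * c * b⁻¹) * b) * c⁻¹ := by rw [← h2]
      _ = c⁻¹ * b := by group
  have hbA : b * a⁻¹ = a⁻¹ * b ^ 2 := by
    calc b * a⁻¹ = a⁻¹ * (a * b * a⁻¹) := by group
      _ = a⁻¹ * b ^ 2 := by rw [h1]
  have hBA : b⁻¹ * a⁻¹ = a⁻¹ * (b⁻¹) ^ 2 := by
    calc b⁻¹ * a⁻¹ = a⁻¹ * (a * b * a⁻¹)⁻¹ := by group
      _ = a⁻¹ * (b ^ 2)⁻¹ := by rw [h1]
      _ = a⁻¹ * (b⁻¹) ^ 2 := by group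
  have pmove : ∀ n : ℕ, (b⁻¹) ^ n * a⁻¹ = a⁻¹ * (b⁻¹) ^ (2 * n) :=
    push_pow a⁻¹ b⁻¹ hBA
  have qmove : ∀ n : ℕ, b ^ n * a⁻¹ = a⁻¹ * b ^ (2 * n) :=
    push_pow a⁻¹ b hbA
  -- the key identity: conjugate (b⁻¹ a b = b a) by c
  have keyL : c * (b⁻¹ * a * b) * c⁻¹ = b⁻¹ * a ^ 4 * b := by
    calc c * (b⁻¹ * a * b) * c⁻¹
        = (c * b * c⁻¹)⁻¹ * ((c * a * c⁻¹) * (c * b * c⁻¹)) := by group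
      _ = (c⁻¹ * b)⁻¹ * (a ^ 2 * (c⁻¹ * b)) := by rw [hcbc, h3]
      _ = b⁻¹ * (c * a ^ 2 * c⁻¹) * b := by group
      _ = b⁻¹ * ((c * a * c⁻¹) ^ 2) * b := by rw [conj_pow]
      _ = b⁻¹ * ((a ^ 2) ^ 2) * b := by rw [h3]
      _ = b⁻¹ * a ^ 4 * b := by group
  have keyR : c * (b * a) * c⁻¹ = (c⁻¹ * b) * a ^ 2 := by
    calc c * (b * a) * c⁻¹ = (c * b * c⁻¹) * (c * a * c⁻¹) := by group
      _ = (c⁻¹ * b) * a ^ 2 := by rw [hcbc, h3]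
  have pow4 : b⁻¹ * a ^ 4 * b = (b * a) ^ 4 := by
    calc b⁻¹ * a ^ 4 * b = b⁻¹ * a ^ 4 * (b⁻¹)⁻¹ := by rw [inv_inv]
      _ = (b⁻¹ * a * (b⁻¹)⁻¹) ^ 4 := by rw [conj_pow]
      _ = (b⁻¹ * a * b) ^ 4 := by rw [inv_inv]
      _ = (b * a) ^ 4 := by rw [hba]
  have E : (b * a) ^ 4 = (c⁻¹ * b) * a ^ 2 := by
    rw [← pow4, ← keyL, hba, keyR]
  have exp4 : ∀ x : G, x ^ 4 = x * x * x * x := by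
    intro x
    rw [show (4 : ℕ) = 3 + 1 from rfl, pow_succ, show (3 : ℕ) = 2 + 1 from rfl,
      pow_succ, pow_two]
  have hcW : b * a ^ 2 * ((b * a) ^ 4)⁻¹ = c := by
    rw [E]; group
  -- normal form: c = a⁻² b⁻¹¹
  have hc2 : c = a⁻¹ * a⁻¹ * (b⁻¹) ^ 11 := by
    calc c = b * a ^ 2 * ((b * a) ^ 4)⁻¹ := hcW.symm
      _ = b * a ^ 2 * ((b * a) * (b * a) * (b * a) * (b * a))⁻¹ := by rw [exp4]
      _ = (b * a * b⁻¹) * (a⁻¹ * b⁻¹ * (a⁻¹ * b⁻¹) * (a⁻¹ * b⁻¹)) := by group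
      _ = (b⁻¹ * a) * (a⁻¹ * b⁻¹ * (a⁻¹ * b⁻¹) * (a⁻¹ * b⁻¹)) := by rw [hbab]
      _ = b⁻¹ * (b⁻¹ * a⁻¹) * (b⁻¹ * (a⁻¹ * b⁻¹)) := by group
      _ = b⁻¹ * (a⁻¹ * (b⁻¹) ^ 2) * (b⁻¹ * (a⁻¹ * b⁻¹)) := by rw [hBA]
      _ = (b⁻¹ * a⁻¹) * ((b⁻¹) ^ 3 * (a⁻¹ * b⁻¹)) := by group
      _ = (a⁻¹ * (b⁻¹) ^ 2) * ((b⁻¹) ^ 3 * (a⁻¹ * b⁻¹)) := by rw [hBA]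
      _ = a⁻¹ * ((b⁻¹) ^ 5 * a⁻¹) * b⁻¹ := by group
      _ = a⁻¹ * (a⁻¹ * (b⁻¹) ^ (2 * 5)) * b⁻¹ := by rw [pmove 5]
      _ = a⁻¹ * a⁻¹ * (b⁻¹) ^ 11 := by group
  -- substitute into h2 : b c b⁻¹ = c²
  have e2 : b * (a⁻¹ * a⁻¹ * (b⁻¹) ^ 11) * b⁻¹
      = (a⁻¹ * a⁻¹ * (b⁻¹) ^ 11) ^ 2 := by rw [← hc2]; exact h2
  have eL : b * (a⁻¹ * a⁻¹ * (b⁻¹) ^ 11) * b⁻¹ = a⁻¹ * a⁻¹ * (b⁻¹) ^ 8 := by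
    calc b * (a⁻¹ * a⁻¹ * (b⁻¹) ^ 11) * b⁻¹
        = (b * a⁻¹) * (a⁻¹ * ((b⁻¹) ^ 11 * b⁻¹)) := by group
      _ = (a⁻¹ * b ^ 2) * (a⁻¹ * ((b⁻¹) ^ 11 * b⁻¹)) := by rw [hbA]
      _ = a⁻¹ * (b ^ 2 * a⁻¹) * ((b⁻¹) ^ 11 * b⁻¹) := by group
      _ = a⁻¹ * (a⁻¹ * b ^ (2 * 2)) * ((b⁻¹) ^ 11 * b⁻¹) := by rw [qmove 2]
      _ = a⁻¹ * a⁻¹ * (b⁻¹) ^ 8 := by group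
  have eR : (a⁻¹ * a⁻¹ * (b⁻¹) ^ 11) ^ 2
      = a⁻¹ * a⁻¹ * a⁻¹ * a⁻¹ * (b⁻¹) ^ 55 := by
    calc (a⁻¹ * a⁻¹ * (b⁻¹) ^ 11) ^ 2
        = a⁻¹ * a⁻¹ * ((b⁻¹) ^ 11 * a⁻¹) * (a⁻¹ * (b⁻¹) ^ 11) := by
          rw [pow_two]; group
      _ = a⁻¹ * a⁻¹ * (a⁻¹ * (b⁻¹) ^ (2 * 11)) * (a⁻¹ * (b⁻¹) ^ 11) := by rw [pmove 11]
      _ = a⁻¹ * a⁻¹ * a⁻¹ * ((b⁻¹) ^ 22 * a⁻¹) * (b⁻¹) ^ 11 := by group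
      _ = a⁻¹ * a⁻¹ * a⁻¹ * (a⁻¹ * (b⁻¹) ^ (2 * 22)) * (b⁻¹) ^ 11 := by rw [pmove 22]
      _ = a⁻¹ * a⁻¹ * a⁻¹ * a⁻¹ * (b⁻¹) ^ 55 := by group
  have e4 : a⁻¹ * a⁻¹ * (b⁻¹) ^ 8 = a⁻¹ * a⁻¹ * a⁻¹ * a⁻¹ * (b⁻¹) ^ 55 :=
    eL.symm.trans (e2.trans eR)
  -- a² = b⁻⁴⁷
  have hN2 : a ^ 2 = (b⁻¹) ^ 47 := by
    calc a ^ 2 = (a ^ 2 * a ^ 2) * (a⁻¹ * a⁻¹ * (b⁻¹) ^ 8) * ((b⁻¹) ^ 8)⁻¹ := by group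
      _ = (a ^ 2 * a ^ 2) * (a⁻¹ * a⁻¹ * a⁻¹ * a⁻¹ * (b⁻¹) ^ 55) * ((b⁻¹) ^ 8)⁻¹ := by
            rw [e4]
      _ = (b⁻¹) ^ 47 := by group
  have e5 : a ^ 2 = (b⁻¹) ^ 94 := by
    calc a ^ 2 = a * (a ^ 2 * a⁻¹) := by group
      _ = a * ((b⁻¹) ^ 47 * a⁻¹) := by rw [hN2]
      _ = a * (a⁻¹ * (b⁻¹) ^ (2 * 47)) := by rw [pmove 47]
      _ = (b⁻¹) ^ 94 := by group
  have hB47 : (b⁻¹) ^ 47 = 1 := by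
    calc (b⁻¹) ^ 47 = (b⁻¹) ^ 94 * ((b⁻¹) ^ 47)⁻¹ := by group
      _ = a ^ 2 * (a ^ 2)⁻¹ := by rw [← e5, ← hN2]
      _ = 1 := by group
  have ha2 : a ^ 2 = 1 := hN2.trans hB47
  have hb47 : b ^ 47 = 1 := by
    calc b ^ 47 = ((b⁻¹) ^ 47)⁻¹ := by group
      _ = (1 : G)⁻¹ := by rw [hB47]
      _ = 1 := inv_one
  have hb4 : b = b ^ 4 := by
    calc b = a ^ 2 * b * (a ^ 2)⁻¹ := by rw [ha2]; group
      _ = a * (a * b * a⁻¹) * a⁻¹ := by rw [pow_two]; group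
      _ = a * b ^ 2 * a⁻¹ := by rw [h1]
      _ = (a * b * a⁻¹) ^ 2 := by rw [conj_pow]
      _ = (b ^ 2) ^ 2 := by rw [h1]
      _ = b ^ 4 := by group
  have hb3 : b ^ 3 = 1 := by
    calc b ^ 3 = b ^ 4 * b⁻¹ := by group
      _ = b * b⁻¹ := by rw [← hb4]
      _ = 1 := by group
  have hb2 : b ^ 2 = 1 := by
    calc b ^ 2 = b ^ 47 * ((b ^ 3) ^ 15)⁻¹ := by group
      _ = b ^ 47 * ((1 : G) ^ 15)⁻¹ := by rw [hb3]
      _ = b ^ 47 := by simp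
      _ = 1 := hb47
  have hb1 : b = 1 := by
    calc b = b ^ 3 * (b ^ 2)⁻¹ := by group
      _ = 1 * (1 : G)⁻¹ := by rw [hb3, hb2]
      _ = 1 := by simp
  have hc1 : c = 1 := by
    calc c = a⁻¹ * a⁻¹ * (b⁻¹) ^ 11 := hc2
      _ = a⁻¹ * a⁻¹ * ((1 : G)⁻¹) ^ 11 := by rw [hb1]
      _ = (a ^ 2)⁻¹ := by group
      _ = (1 : G)⁻¹ := by rw [ha2]
      _ = 1 := inv_one
  have ha1 : a = 1 := by
    have haa : a = a ^ 2 := by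
      calc a = c * a * c⁻¹ := by rw [hc1]; group
        _ = a ^ 2 := h3
    exact haa.trans ha2
  exact ⟨ha1, hb1, hc1⟩

private lemma presented_trivial {α : Type*} (rels : Set (FreeGroup α))
    (h : ∀ i : α,
      (QuotientGroup.mk' (Subgroup.normalClosure rels) (FreeGroup.of i) :
        PresentedGroup rels) = 1) :
    ∀ x : PresentedGroup rels, x = 1 := by
  have hphi : QuotientGroup.mk' (Subgroup.normalClosure rels)
      = (1 : FreeGroup α →* PresentedGroup rels) :=
    FreeGroup.ext_hom _ _ (fun i => by rw [h i]; rfl)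
  intro x
  obtain ⟨w, hw⟩ := QuotientGroup.mk'_surjective (Subgroup.normalClosure rels) x
  rw [← hw, hphi]
  rfl

/-- K. Brown's example: the group ⟨a, b, c | aba⁻¹ = b², bcb⁻¹ = c², cac⁻¹ = a²⟩
is the trivial group. -/
theorem brown_triangle_group_trivial :
    ∀ x : PresentedGroup
      (({FreeGroup.of 0 * FreeGroup.of 1 * (FreeGroup.of 0)⁻¹ *
            (FreeGroup.of 1 * FreeGroup.of 1)⁻¹,
         FreeGroup.of 1 * FreeGroup.of 2 * (FreeGroup.of 1)⁻¹ *
            (FreeGroup.of 2 * FreeGroup.of 2)⁻¹,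
         FreeGroup.of 2 * FreeGroup.of 0 * (FreeGroup.of 2)⁻¹ *
            (FreeGroup.of 0 * FreeGroup.of 0)⁻¹} : Set (FreeGroup (Fin 3)))),
      x = 1 := by
  have key : ∀ rels : Set (FreeGroup (Fin 3)),
      (FreeGroup.of 0 * FreeGroup.of 1 * (FreeGroup.of 0)⁻¹ *
          (FreeGroup.of 1 * FreeGroup.of 1)⁻¹) ∈ rels →
      (FreeGroup.of 1 * FreeGroup.of 2 * (FreeGroup.of 1)⁻¹ *
          (FreeGroup.of 2 * FreeGroup.of 2)⁻¹) ∈ rels →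
      (FreeGroup.of 2 * FreeGroup.of 0 * (FreeGroup.of 2)⁻¹ *
          (FreeGroup.of 0 * FreeGroup.of 0)⁻¹) ∈ rels →
      ∀ x : PresentedGroup rels, x = 1 := by
    intro rels hm1 hm2 hm3
    have hone : ∀ r ∈ rels,
        (QuotientGroup.mk' (Subgroup.normalClosure rels) r : PresentedGroup rels) = 1 :=
      fun r hr => (QuotientGroup.eq_one_iff r).mpr (Subgroup.subset_normalClosure hr)
    have h1' := hone _ hm1
    have h2' := hone _ hm2
    have h3' := hone _ hm3
    simp only [map_mul, map_inv] at h1' h2' h3'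
    have h1 := mul_inv_eq_one.mp h1'
    have h2 := mul_inv_eq_one.mp h2'
    have h3 := mul_inv_eq_one.mp h3'
    rw [← pow_two] at h1 h2 h3
    obtain ⟨ha, hb, hc⟩ := collapse h1 h2 h3
    refine presented_trivial rels ?_
    intro i
    fin_cases i
    · exact ha
    · exact hb
    · exact hc
  exact key _ (Set.mem_insert _ _)
    (Set.mem_insert_of_mem _ (Set.mem_insert _ _))
    (Set.mem_insert_of_mem _ (Set.mem_insert_of_mem _ rfl))
end

section
/- If Γ is a countable group with Kazhdan's Property (T), then Γ is finitely generated. -/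
open scoped ENNReal

section lpPerm

variable {α β : Type}

private lemma two_toReal_pos : (0:ℝ) < (2 : ℝ≥0∞).toReal := by norm_num

lemma memlp_comp (σ : α ≃ β) {f : β → ℂ} (hf : Memℓp f 2) :
    Memℓp (fun i => f (σ i)) 2 := by
  rw [memℓp_gen_iff two_toReal_pos] at hf ⊢
  exact (Equiv.summable_iff σ).2 hf

noncomputable def permLp (e : Equiv.Perm α) :
    lp (fun _ : α => ℂ) 2 ≃ₗᵢ[ℂ] lp (fun _ : α => ℂ) 2 where
  toFun f := ⟨fun i => f (e.symm i), memlp_comp e.symm (lp.memℓp f)⟩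
  invFun f := ⟨fun i => f (e i), memlp_comp e (lp.memℓp f)⟩
  left_inv f := by ext i; simp
  right_inv f := by ext i; simp
  map_add' f g := rfl
  map_smul' c f := rfl
  norm_map' f := by
    rw [lp.norm_eq_tsum_rpow two_toReal_pos, lp.norm_eq_tsum_rpow two_toReal_pos]
    congr 1
    exact e.symm.tsum_eq (fun j => ‖f j‖ ^ (2 : ℝ≥0∞).toReal)

@[simp] lemma permLp_apply (e : Equiv.Perm α) (f : lp (fun _ : α => ℂ) 2) (i : α) :
    (permLp e f : ∀ _ : α, ℂ) i = f (e.symm i) := rfl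

end lpPerm

section main

variable {Γ : Type} [Group Γ]

/-- Index type: pairs (finite set S, coset of the subgroup generated by S). -/
abbrev XT (Γ : Type) [Group Γ] := Σ S : Finset Γ, Γ ⧸ Subgroup.closure (S : Set Γ)

instance instSMulXT : SMul Γ (XT Γ) := ⟨fun g x => ⟨x.1, g • x.2⟩⟩

@[simp] lemma smul_XT_def (g : Γ) (x : XT Γ) : g • x = ⟨x.1, g • x.2⟩ := rfl

instance instMulActionXT : MulAction Γ (XT Γ) where
  one_smul x := by cases x; simp
  mul_smul g h x := by cases x; simp [mul_smul]

noncomputable def rhoT (Γ : Type) [Group Γ] :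
    Γ →* (lp (fun _ : XT Γ => ℂ) 2 ≃ₗᵢ[ℂ] lp (fun _ : XT Γ => ℂ) 2) where
  toFun g := permLp (MulAction.toPerm g)
  map_one' := by
    refine LinearIsometryEquiv.ext fun f => lp.ext (funext fun i => ?_)
    simp
  map_mul' g h := by
    refine LinearIsometryEquiv.ext fun f => lp.ext (funext fun i => ?_)
    simp [mul_smul]

lemma rhoT_apply (g : Γ) (f : lp (fun _ : XT Γ => ℂ) 2) (i : XT Γ) :
    (rhoT Γ g f : ∀ _ : XT Γ, ℂ) i = f (g⁻¹ • i) := rfl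

end main


/-- A discrete group has Kazhdan's Property (T) if every unitary representation of it
on a complex Hilbert space with almost-invariant vectors has a nonzero invariant
vector. -/
def HasPropertyT (Γ : Type*) [Group Γ] : Prop :=
  ∀ (H : Type) (_ : NormedAddCommGroup H) (_ : InnerProductSpace ℂ H)
    (_ : CompleteSpace H) (ρ : Γ →* (H ≃ₗᵢ[ℂ] H)),
    (∀ (S : Finset Γ) (ε : ℝ), 0 < ε →
      ∃ v : H, ‖v‖ = 1 ∧ ∀ g ∈ S, ‖ρ g v - v‖ < ε) →
    ∃ v : H, v ≠ 0 ∧ ∀ g : Γ, ρ g v = v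

/-- A countable group with Kazhdan's Property (T) is finitely generated. -/
theorem propertyT_implies_finitely_generated (Γ : Type) [Group Γ] [Countable Γ]
    (hT : HasPropertyT Γ) :
    ∃ S : Finset Γ, Subgroup.closure (S : Set Γ) = ⊤ := by
  classical
  have halmost : ∀ (S : Finset Γ) (ε : ℝ), 0 < ε →
      ∃ w : lp (fun _ : XT Γ => ℂ) 2, ‖w‖ = 1 ∧ ∀ g ∈ S, ‖rhoT Γ g w - w‖ < ε := by
    intro S ε hε
    set x₀ : XT Γ := ⟨S, ((1 : Γ) : Γ ⧸ Subgroup.closure (S : Set Γ))⟩ with hx₀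
    refine ⟨lp.single 2 x₀ (1 : ℂ), ?_, ?_⟩
    · simpa using lp.norm_single (p := 2) two_toReal_pos (fun _ : XT Γ => (1 : ℂ)) x₀
    · intro g hg
      have hfix : g • x₀ = x₀ := by
        have h1 : g • ((1 : Γ) : Γ ⧸ Subgroup.closure (S : Set Γ))
            = ((1 : Γ) : Γ ⧸ Subgroup.closure (S : Set Γ)) := by
          rw [MulAction.Quotient.smul_mk]
          exact (QuotientGroup.eq).2 (by simpa using Subgroup.subset_closure hg)
        rw [hx₀, smul_XT_def, h1]
      have : rhoT Γ g (lp.single 2 x₀ (1 : ℂ)) = lp.single 2 x₀ (1 : ℂ) := by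
        refine lp.ext (funext fun j => ?_)
        have key : (g⁻¹ • j = x₀) ↔ (j = x₀) := by
          rw [inv_smul_eq_iff, hfix]
        rw [rhoT_apply, lp.single_apply, lp.single_apply]
        by_cases h : j = x₀
        · rw [key.2 h, h]
        · rw [Pi.single_apply, Pi.single_apply, if_neg (fun hc => h (key.1 hc)), if_neg h]
      rw [this]
      simpa using hε
  haveI : Fact ((1:ℝ≥0∞) ≤ 2) := ⟨by norm_num⟩
  obtain ⟨v, hv0, hvinv⟩ := hT (lp (fun _ : XT Γ => ℂ) 2) inferInstance inferInstance inferInstance (rhoT Γ) halmost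
  · -- extract finite generation from the invariant vector
    have hco : ∀ (g : Γ) (j : XT Γ), v (g • j) = v j := by
      intro g j
      have h1 : (rhoT Γ g v : ∀ _ : XT Γ, ℂ) (g • j) = v (g • j) := by rw [hvinv g]
      rw [rhoT_apply, inv_smul_smul] at h1
      exact h1.symm
    have hex : ∃ x : XT Γ, v x ≠ 0 := by
      by_contra h
      push_neg at h
      exact hv0 (lp.ext (funext fun i => h i))
    obtain ⟨⟨S, c⟩, hxc⟩ := hex
    have hall : ∀ d : Γ ⧸ Subgroup.closure (S : Set Γ), v ⟨S, d⟩ = v ⟨S, c⟩ := by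
      intro d
      obtain ⟨a, rfl⟩ := QuotientGroup.mk_surjective d
      obtain ⟨b, rfl⟩ := QuotientGroup.mk_surjective c
      have : (a * b⁻¹) • ((b : Γ ⧸ Subgroup.closure (S : Set Γ))) = (a : Γ ⧸ Subgroup.closure (S : Set Γ)) := by
        rw [MulAction.Quotient.smul_mk]
        simp [smul_eq_mul]
      calc v ⟨S, (a : Γ ⧸ Subgroup.closure (S : Set Γ))⟩ = v ((a * b⁻¹) • (⟨S, (b : Γ ⧸ Subgroup.closure (S : Set Γ))⟩ : XT Γ)) := by
            rw [smul_XT_def, this]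
        _ = v ⟨S, (b : Γ ⧸ Subgroup.closure (S : Set Γ))⟩ := hco _ _
    -- summability forces the quotient to be finite
    have hs : Summable fun j : XT Γ => ‖v j‖ ^ (2 : ℝ≥0∞).toReal :=
      (memℓp_gen_iff two_toReal_pos).1 (lp.memℓp v)
    have hpos : (0 : ℝ) < ‖v ⟨S, c⟩‖ ^ (2 : ℝ≥0∞).toReal :=
      Real.rpow_pos_of_pos (norm_pos_iff.2 hxc) _
    have hfin : {j : XT Γ | ¬ ‖v j‖ ^ (2 : ℝ≥0∞).toReal
        < ‖v ⟨S, c⟩‖ ^ (2 : ℝ≥0∞).toReal}.Finite := by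
      have := hs.tendsto_cofinite_zero
      have hev := this.eventually (eventually_lt_nhds hpos)
      simpa [Filter.eventually_cofinite] using hev
    haveI : Finite (Γ ⧸ Subgroup.closure (S : Set Γ)) := by
      haveI := hfin.to_subtype
      refine Finite.of_injective (fun d : Γ ⧸ Subgroup.closure (S : Set Γ) =>
        (⟨⟨S, d⟩, by simp [hall d, lt_irrefl]⟩ :
          {j : XT Γ | ¬ ‖v j‖ ^ (2 : ℝ≥0∞).toReal
            < ‖v ⟨S, c⟩‖ ^ (2 : ℝ≥0∞).toReal})) ?_
      intro d₁ d₂ h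
      have h2 : (⟨S, d₁⟩ : XT Γ) = ⟨S, d₂⟩ := congrArg Subtype.val h
      exact eq_of_heq (Sigma.mk.inj_iff.1 h2).2
    -- Δ is finitely generated and of finite index, so Γ is finitely generated
    haveI := Fintype.ofFinite (Γ ⧸ Subgroup.closure (S : Set Γ))
    refine ⟨S ∪ Finset.image (fun q : Γ ⧸ Subgroup.closure (S : Set Γ) => q.out) Finset.univ, eq_top_iff.2 ?_⟩
    intro g _
    set q : Γ ⧸ Subgroup.closure (S : Set Γ) := ((g : Γ) : Γ ⧸ Subgroup.closure (S : Set Γ)) with hq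
    have h1 : q.out ∈ Subgroup.closure
        ((S ∪ Finset.image (fun q : Γ ⧸ Subgroup.closure (S : Set Γ) => q.out) Finset.univ : Finset Γ) : Set Γ) :=
      Subgroup.subset_closure (by simp)
    have h2 : q.out⁻¹ * g ∈ Subgroup.closure (S : Set Γ) := by
      rw [← QuotientGroup.eq, QuotientGroup.out_eq']
    have hle : Subgroup.closure (S : Set Γ) ≤ Subgroup.closure
        ((S ∪ Finset.image (fun q : Γ ⧸ Subgroup.closure (S : Set Γ) => q.out) Finset.univ : Finset Γ) : Set Γ) := by
      exact Subgroup.closure_mono (by intro x hx; simp [hx])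
    have := mul_mem h1 (hle h2)
    simpa [mul_assoc] using this
end

section
/- Let Γ act on a set X of cells with finite stabilizers, and suppose Γ' ≤ Γ has finite index d. If A is a set of orbit representatives for Γ on X and A' for Γ', then Σ_{v∈A'} 1/|Γ'_v| = d · Σ_{v∈A} 1/|Γ_v|. In particular, Serre's covolume sum is multiplicative in the index of subgroups. -/
open MulAction
open scoped ENNReal NNReal

private lemma tsum_const_ennreal {β : Type*} [Finite β] (c : ℝ≥0∞) :
    ∑' _ : β, c = (Nat.card β : ℝ≥0∞) * c := by
  cases nonempty_fintype β
  rw [tsum_fintype]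
  simp [Finset.sum_const, Nat.card_eq_fintype_card, Finset.card_univ, nsmul_eq_mul]

private def stabEquivAux {Γ : Type*} [Group Γ] {X : Type*} [MulAction Γ X]
    (Γ' : Subgroup Γ) (v : X) :
    stabilizer Γ' v ≃ Γ'.subgroupOf (stabilizer Γ v) where
  toFun x := ⟨⟨(x : Γ'), x.2⟩, (x : Γ').2⟩
  invFun y := ⟨⟨((y : stabilizer Γ v) : Γ), y.2⟩, (y : stabilizer Γ v).2⟩
  left_inv _ := rfl
  right_inv _ := rfl

/-- Serre's covolume sum is multiplicative in the index: if `Γ` acts on a set `X` of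
cells with finite stabilizers, `Γ' ≤ Γ` has finite index `d`, and `A`, `A'` are sets of
orbit representatives for `Γ`, `Γ'` respectively, then
`Σ_{v ∈ A'} 1/|Γ'_v| = d · Σ_{v ∈ A} 1/|Γ_v|`. -/
theorem covolume_multiplicative_in_index (Γ : Type*) [Group Γ] (X : Type*)
    [MulAction Γ X]
    (hfin : ∀ x : X, Finite (MulAction.stabilizer Γ x))
    (Γ' : Subgroup Γ) (d : ℕ) (hd : Γ'.index = d) (hd0 : d ≠ 0)
    (A A' : Set X)
    (hA : ∀ x : X, ∃! a, a ∈ A ∧ a ∈ MulAction.orbit Γ x)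
    (hA' : ∀ x : X, ∃! a, a ∈ A' ∧ a ∈ MulAction.orbit Γ' x)
    (hsum : Summable fun v : A =>
      (1 : ℝ) / Nat.card (MulAction.stabilizer Γ (v : X))) :
    ∑' v : A', (1 : ℝ) / Nat.card (MulAction.stabilizer Γ' (v : X)) =
      d * ∑' v : A, (1 : ℝ) / Nat.card (MulAction.stabilizer Γ (v : X)) := by
  classical
  -- the Γ'-orbit representative function
  set r : X → X := fun x => (hA' x).choose with hr
  have hrA' : ∀ x, r x ∈ A' := fun x => (hA' x).choose_spec.1.1
  have hrorb : ∀ x, r x ∈ orbit Γ' x := fun x => (hA' x).choose_spec.1.2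
  have hru : ∀ x y, y ∈ A' → y ∈ orbit Γ' x → r x = y := fun x y h1 h2 =>
    ((hA' x).choose_spec.2 y ⟨h1, h2⟩).symm
  have hrcongr : ∀ (k : Γ), k ∈ Γ' → ∀ x : X, r (k • x) = r x := by
    intro k hk x
    apply hru
    · exact hrA' x
    · have e : k • x = (⟨k, hk⟩ : Γ') • x := rfl
      rw [e, orbit_smul]
      exact hrorb x
  -- well-definedness of the orbit of `out⁻¹ • x` on cosets
  have Φwd : ∀ (g : Γ) (x : X),
      r ((Quotient.out (g : Γ ⧸ Γ'))⁻¹ • x) = r (g⁻¹ • x) := by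
    intro g x
    have hk : g⁻¹ * Quotient.out (g : Γ ⧸ Γ') ∈ Γ' := by
      rw [← QuotientGroup.eq]
      exact (Quotient.out_eq _).symm
    have h1 : (Quotient.out (g : Γ ⧸ Γ'))⁻¹ • x
        = (g⁻¹ * Quotient.out (g : Γ ⧸ Γ'))⁻¹ • (g⁻¹ • x) := by
      rw [smul_smul]
      congr 1
      group
    rw [h1, hrcongr _ (Γ'.inv_mem hk)]
  -- the map from pairs (coset, Γ-representative) to Γ'-representatives
  set Φ : (Γ ⧸ Γ') × A → A' :=
    fun p => ⟨r ((Quotient.out p.1)⁻¹ • (p.2 : X)), hrA' _⟩ with hΦ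
  have Φchar : ∀ (g : Γ) (b : A) (a' : A'),
      Φ ((g : Γ ⧸ Γ'), b) = a' ↔ (a' : X) ∈ orbit Γ' (g⁻¹ • (b : X)) := by
    intro g b a'
    constructor
    · intro h
      have h2 := congrArg Subtype.val h
      simp only [hΦ] at h2
      rw [Φwd] at h2
      rw [← h2]
      exact hrorb _
    · intro h
      apply Subtype.ext
      show r ((Quotient.out ((g : Γ ⧸ Γ')))⁻¹ • (b : X)) = (a' : X)
      rw [Φwd]
      exact hru _ _ a'.2 h
  -- each fiber of Φ is in bijection with a coset space of the stabilizer
  have fibEquiv : ∀ a' : A',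
      Nonempty (((stabilizer Γ (a' : X)) ⧸ (Γ'.subgroupOf (stabilizer Γ (a' : X))))
        ≃ {p : (Γ ⧸ Γ') × A // Φ p = a'}) := by
    intro a'
    obtain ⟨⟨haA, haorb⟩, hauniq⟩ := (hA (a' : X)).choose_spec
    set v : X := (a' : X) with hv
    set a : X := (hA (a' : X)).choose with ha
    obtain ⟨g₀, hg₀⟩ := haorb
    simp only at hg₀
    -- the basic map
    set ψ₀ : stabilizer Γ v → {p : (Γ ⧸ Γ') × A // Φ p = a'} := fun s =>
      ⟨(((g₀ * (s : Γ) : Γ) : Γ ⧸ Γ'), ⟨a, haA⟩), by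
        apply (Φchar (g₀ * (s : Γ)) ⟨a, haA⟩ a').mpr
        have h2 : ((g₀ * (s : Γ))⁻¹) • a = v := by
          rw [mul_inv_rev, mul_smul, ← hg₀, inv_smul_smul]
          exact mem_stabilizer_iff.mp ((stabilizer Γ v).inv_mem s.2)
        rw [h2]
        exact mem_orbit_self v⟩ with hψ₀
    have hwd : ∀ s t : stabilizer Γ v,
        QuotientGroup.leftRel (Γ'.subgroupOf (stabilizer Γ v)) s t →
        ψ₀ s = ψ₀ t := by
      intro s t hst
      have hst : ((s : stabilizer Γ v) : Γ)⁻¹ * ((t : stabilizer Γ v) : Γ) ∈ Γ' :=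
        Subgroup.mem_subgroupOf.mp (QuotientGroup.leftRel_apply.mp hst)
      apply Subtype.ext
      apply Prod.ext
      · show ((g₀ * (s : Γ) : Γ) : Γ ⧸ Γ') = ((g₀ * (t : Γ) : Γ) : Γ ⧸ Γ')
        rw [QuotientGroup.eq]
        have he : (g₀ * (s : Γ))⁻¹ * (g₀ * (t : Γ)) = (s : Γ)⁻¹ * (t : Γ) := by group
        rw [he]
        exact hst
      · rfl
    set ψ : ((stabilizer Γ v) ⧸ (Γ'.subgroupOf (stabilizer Γ v))) →
        {p : (Γ ⧸ Γ') × A // Φ p = a'} := fun q => Quotient.liftOn' q ψ₀ hwd with hψ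
    refine ⟨Equiv.ofBijective ψ ⟨?_, ?_⟩⟩
    · -- injective
      intro q1 q2
      refine Quotient.inductionOn₂' q1 q2 (fun s t h => ?_)
      apply Quotient.sound'
      apply QuotientGroup.leftRel_apply.mpr
      apply Subgroup.mem_subgroupOf.mpr
      have h1 := congrArg (fun z => z.val.1) h
      simp only [hψ, Quotient.liftOn'_mk'', hψ₀] at h1
      rw [QuotientGroup.eq] at h1
      have he : (g₀ * (s : Γ))⁻¹ * (g₀ * (t : Γ)) = (s : Γ)⁻¹ * (t : Γ) := by group
      rwa [he] at h1
    · -- surjective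
      rintro ⟨⟨c, b⟩, hp⟩
      obtain ⟨g, rfl⟩ := QuotientGroup.mk_surjective c
      have horb := (Φchar g b a').mp hp
      obtain ⟨h, hh⟩ := horb
      simp only at hh
      have hh' : ((h : Γ) * g⁻¹) • (b : X) = v := by
        rw [mul_smul]; exact hh
      have hbv' : (g * (h : Γ)⁻¹) • v = (b : X) := by
        rw [← hh', ← mul_smul,
          show g * (h : Γ)⁻¹ * ((h : Γ) * g⁻¹) = 1 by group, one_smul]
      have hbv : (b : X) ∈ orbit Γ v := ⟨g * (h : Γ)⁻¹, hbv'⟩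
      have hba : (b : X) = a := hauniq (b : X) ⟨b.2, hbv⟩
      have hs₀ : g₀⁻¹ * g * (h : Γ)⁻¹ ∈ stabilizer Γ v := by
        rw [mem_stabilizer_iff, mul_assoc, mul_smul, hbv', hba, ← hg₀, inv_smul_smul]
      refine ⟨Quotient.mk'' ⟨g₀⁻¹ * g * (h : Γ)⁻¹, hs₀⟩, ?_⟩
      simp only [hψ, Quotient.liftOn'_mk'', hψ₀]
      apply Subtype.ext
      apply Prod.ext
      · show ((g₀ * (g₀⁻¹ * g * (h : Γ)⁻¹) : Γ) : Γ ⧸ Γ') = ((g : Γ) : Γ ⧸ Γ')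
        rw [QuotientGroup.eq]
        have he : (g₀ * (g₀⁻¹ * g * (h : Γ)⁻¹))⁻¹ * g = (h : Γ) := by group
        rw [he]
        exact h.2
      · exact Subtype.ext hba.symm
  -- finiteness and cardinality facts
  have hfin' : ∀ x : X, Finite (stabilizer Γ' x) := by
    intro x
    have := hfin x
    exact Finite.of_equiv _ (stabEquivAux Γ' x).symm
  have hfibFin : ∀ a' : A', Finite {p : (Γ ⧸ Γ') × A // Φ p = a'} := by
    intro a'
    have := hfin (a' : X)
    obtain ⟨e⟩ := fibEquiv a'
    exact Finite.of_equiv _ e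
  have hquotFin : Finite (Γ ⧸ Γ') := by
    apply Nat.finite_of_card_ne_zero
    rw [← Subgroup.index_eq_card, hd]
    exact hd0
  -- cardinality arithmetic on each fiber
  have keycard : ∀ a' : A',
      (Nat.card {p : (Γ ⧸ Γ') × A // Φ p = a'} : ℝ≥0∞) *
        (Nat.card (stabilizer Γ (a' : X)) : ℝ≥0∞)⁻¹ =
      (Nat.card (stabilizer Γ' (a' : X)) : ℝ≥0∞)⁻¹ := by
    intro a'
    have := hfin (a' : X)
    set H : Subgroup (stabilizer Γ (a' : X)) := Γ'.subgroupOf (stabilizer Γ (a' : X)) with hH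
    obtain ⟨e⟩ := fibEquiv a'
    have h1 : Nat.card {p : (Γ ⧸ Γ') × A // Φ p = a'} =
        Nat.card (stabilizer Γ (a' : X) ⧸ H) := (Nat.card_congr e).symm
    have h2 : Nat.card H = Nat.card (stabilizer Γ' (a' : X)) :=
      (Nat.card_congr (stabEquivAux Γ' (a' : X))).symm
    have h3 : Nat.card (stabilizer Γ (a' : X) ⧸ H) * Nat.card H =
        Nat.card (stabilizer Γ (a' : X)) := by
      rw [← Subgroup.index_eq_card]
      exact Subgroup.index_mul_card H
    rw [h1, h2] at *
    set q : ℕ := Nat.card (stabilizer Γ (a' : X) ⧸ H)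
    set m : ℕ := Nat.card (stabilizer Γ' (a' : X))
    set n : ℕ := Nat.card (stabilizer Γ (a' : X))
    have hn0 : n ≠ 0 := Nat.card_pos.ne'
    have hq0 : q ≠ 0 := by
      intro hq
      rw [hq, zero_mul] at h3
      exact hn0 h3.symm
    have hqm : (q : ℝ≥0∞) * (m : ℝ≥0∞) = (n : ℝ≥0∞) := by exact_mod_cast h3
    rw [← hqm, ENNReal.mul_inv (Or.inl (by exact_mod_cast hq0)) (Or.inl (ENNReal.natCast_ne_top q)),
      ← mul_assoc, ENNReal.mul_inv_cancel (by exact_mod_cast hq0) (ENNReal.natCast_ne_top q),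
      one_mul]
  -- every element of a fiber has the same Γ-stabilizer cardinality
  have fibstab : ∀ (a' : A') (p : (Γ ⧸ Γ') × A), Φ p = a' →
      Nat.card (stabilizer Γ (p.2 : X)) = Nat.card (stabilizer Γ (a' : X)) := by
    rintro a' ⟨c, b⟩ hp
    obtain ⟨g, rfl⟩ := QuotientGroup.mk_surjective c
    obtain ⟨h, hh⟩ := (Φchar g b a').mp hp
    have horb : (a' : X) ∈ orbit Γ (b : X) := by
      refine ⟨(h : Γ) * g⁻¹, ?_⟩
      show ((h : Γ) * g⁻¹) • (b : X) = (a' : X)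
      rw [mul_smul]
      exact hh
    have hrel : orbitRel Γ X (a' : X) (b : X) := (orbitRel_apply).mpr horb
    exact (Nat.card_congr (stabilizerEquivStabilizerOfOrbitRel hrel).toEquiv).symm
  -- the main computation in ℝ≥0∞
  have key : (∑' a' : A', (Nat.card (stabilizer Γ' (a' : X)) : ℝ≥0∞)⁻¹)
      = (d : ℝ≥0∞) * ∑' a : A, (Nat.card (stabilizer Γ (a : X)) : ℝ≥0∞)⁻¹ := by
    have e1 : ∑' p : (Γ ⧸ Γ') × A, (Nat.card (stabilizer Γ (p.2 : X)) : ℝ≥0∞)⁻¹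
        = (d : ℝ≥0∞) * ∑' a : A, (Nat.card (stabilizer Γ (a : X)) : ℝ≥0∞)⁻¹ := by
      rw [ENNReal.tsum_prod']
      calc ∑' (_ : Γ ⧸ Γ') (a : A), (Nat.card (stabilizer Γ (a : X)) : ℝ≥0∞)⁻¹
          = (Nat.card (Γ ⧸ Γ') : ℝ≥0∞) *
            ∑' a : A, (Nat.card (stabilizer Γ (a : X)) : ℝ≥0∞)⁻¹ := tsum_const_ennreal _
        _ = (d : ℝ≥0∞) * ∑' a : A, (Nat.card (stabilizer Γ (a : X)) : ℝ≥0∞)⁻¹ := by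
            rw [← Subgroup.index_eq_card, hd]
    have e2 : ∑' p : (Γ ⧸ Γ') × A, (Nat.card (stabilizer Γ (p.2 : X)) : ℝ≥0∞)⁻¹
        = ∑' (a' : A') (x : {p : (Γ ⧸ Γ') × A // Φ p = a'}),
            (Nat.card (stabilizer Γ ((x : (Γ ⧸ Γ') × A).2 : X)) : ℝ≥0∞)⁻¹ := by
      rw [← (Equiv.sigmaFiberEquiv Φ).tsum_eq
        (fun p : (Γ ⧸ Γ') × A => (Nat.card (stabilizer Γ (p.2 : X)) : ℝ≥0∞)⁻¹)]
      rw [ENNReal.tsum_sigma']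
      exact tsum_congr fun a => tsum_congr fun b => rfl
    have e3 : ∀ a' : A',
        (∑' x : {p : (Γ ⧸ Γ') × A // Φ p = a'},
          (Nat.card (stabilizer Γ ((x : (Γ ⧸ Γ') × A).2 : X)) : ℝ≥0∞)⁻¹)
        = (Nat.card (stabilizer Γ' (a' : X)) : ℝ≥0∞)⁻¹ := by
      intro a'
      have := hfibFin a'
      calc (∑' x : {p : (Γ ⧸ Γ') × A // Φ p = a'},
            (Nat.card (stabilizer Γ ((x : (Γ ⧸ Γ') × A).2 : X)) : ℝ≥0∞)⁻¹)
          = ∑' _ : {p : (Γ ⧸ Γ') × A // Φ p = a'},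
            (Nat.card (stabilizer Γ (a' : X)) : ℝ≥0∞)⁻¹ := by
            apply tsum_congr
            intro x
            rw [fibstab a' x.1 x.2]
        _ = (Nat.card {p : (Γ ⧸ Γ') × A // Φ p = a'} : ℝ≥0∞) *
            (Nat.card (stabilizer Γ (a' : X)) : ℝ≥0∞)⁻¹ := tsum_const_ennreal _
        _ = (Nat.card (stabilizer Γ' (a' : X)) : ℝ≥0∞)⁻¹ := keycard a'
    rw [← e1, e2]
    exact tsum_congr fun a' => (e3 a').symm
  -- pass from ℝ≥0∞ to ℝ
  have hne : ∀ x : X, (Nat.card (stabilizer Γ x) : ℝ≥0∞)⁻¹ ≠ ⊤ := by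
    intro x
    have := hfin x
    exact ENNReal.inv_ne_top.mpr (by exact_mod_cast Nat.card_pos.ne')
  have hne' : ∀ x : X, (Nat.card (stabilizer Γ' x) : ℝ≥0∞)⁻¹ ≠ ⊤ := by
    intro x
    have := hfin' x
    exact ENNReal.inv_ne_top.mpr (by exact_mod_cast Nat.card_pos.ne')
  have tL := ENNReal.tsum_toReal_eq
    (f := fun a' : A' => (Nat.card (stabilizer Γ' (a' : X)) : ℝ≥0∞)⁻¹) (fun a' => hne' _)
  have tR := ENNReal.tsum_toReal_eq
    (f := fun a : A => (Nat.card (stabilizer Γ (a : X)) : ℝ≥0∞)⁻¹) (fun a => hne _)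
  have tpt : ∀ n : ℕ, ((n : ℝ≥0∞)⁻¹).toReal = (1 : ℝ) / n := by
    intro n
    simp [ENNReal.toReal_inv, one_div]
  calc ∑' v : A', (1 : ℝ) / Nat.card (stabilizer Γ' (v : X))
      = ∑' v : A', ((Nat.card (stabilizer Γ' (v : X)) : ℝ≥0∞)⁻¹).toReal :=
        tsum_congr (fun v => (tpt _).symm)
    _ = (∑' v : A', (Nat.card (stabilizer Γ' (v : X)) : ℝ≥0∞)⁻¹).toReal := tL.symm
    _ = ((d : ℝ≥0∞) * ∑' a : A, (Nat.card (stabilizer Γ (a : X)) : ℝ≥0∞)⁻¹).toReal := by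
        rw [key]
    _ = d * (∑' a : A, (Nat.card (stabilizer Γ (a : X)) : ℝ≥0∞)⁻¹).toReal := by
        rw [ENNReal.toReal_mul]
        simp
    _ = d * ∑' v : A, (1 : ℝ) / Nat.card (stabilizer Γ (v : X)) := by
        rw [tR]
        exact congrArg _ (tsum_congr (fun v => tpt _))
end
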